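/- Let S be a Cu-semigroup. Suppose that for every a', a, b, c, x', x ∈ S with a' ≪ a ≤ b + c and x' ≪ x ≤ a, x ≤ b, there exists e ∈ S with a' ≤ e + c, x' ≪ e, e ≤ a, and e ≤ b. Then S satisfies (O6+): for all a, b, c, x', x, y', y ∈ S with a ≤ b + c, x' ≪ x ≤ a, b, and y' ≪ y ≤ a, c, there exist e, f ∈ S with a ≤ e + f, x' ≪ e ≤ a, b, and y' ≪ f ≤ a, c. -/

import Mathlib

/-- The sequential way-below relation in a partially ordered monoid. -/
def CuWayBelow {S : Type*} [Preorder S] (a b : S) : Prop :=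
  ∀ f : ℕ → S, Monotone f → ∀ s : S, IsLUB (Set.range f) s → b ≤ s → ∃ n, a ≤ f n

section Aux

variable {S : Type*} [AddCommMonoid S] [PartialOrder S]
    [CovariantClass S S (· + ·) (· ≤ ·)]

theorem cuwb_le {u v : S} (h : CuWayBelow u v) : u ≤ v := by
  obtain ⟨n, hn⟩ := h (fun _ => v) monotone_const v
    (by rw [Set.range_const]; exact isLUB_singleton) le_rfl
  exact hn

theorem le_cuwb {u v w : S} (h : u ≤ v) (h2 : CuWayBelow v w) : CuWayBelow u w :=
  fun f hf s hs hws => (h2 f hf s hs hws).imp fun _ hn => h.trans hn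

theorem cuwb_le' {u v w : S} (h : CuWayBelow u v) (h2 : v ≤ w) : CuWayBelow u w :=
  fun f hf s hs hws => h f hf s hs (h2.trans hws)

/-- Interpolation: given `z ≪ E` and `u' ≪ u ≤ E + c`, find `e'` with
`z ≪ e' ≪ E` and `u' ≤ e' + c`. -/
theorem cuwb_interp
    (hO2 : ∀ a : S, ∃ f : ℕ → S, Monotone f ∧ (∀ n, CuWayBelow (f n) (f (n + 1))) ∧
      IsLUB (Set.range f) a)
    (hO4 : ∀ f g : ℕ → S, Monotone f → Monotone g → ∀ s t : S,
      IsLUB (Set.range f) s → IsLUB (Set.range g) t →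
      IsLUB (Set.range fun n => f n + g n) (s + t))
    {c z E u' u : S} (hz : CuWayBelow z E) (hu : CuWayBelow u' u) (hle : u ≤ E + c) :
    ∃ e' : S, CuWayBelow z e' ∧ CuWayBelow e' E ∧ u' ≤ e' + c := by
  obtain ⟨g, hgmono, hgwb, hglub⟩ := hO2 E
  obtain ⟨k₁, hk₁⟩ := hz g hgmono E hglub le_rfl
  have hclub : IsLUB (Set.range fun _ : ℕ => c) c := by
    rw [Set.range_const]; exact isLUB_singleton
  have hlub2 : IsLUB (Set.range fun k => g k + c) (E + c) :=
    hO4 g _ hgmono monotone_const E c hglub hclub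
  obtain ⟨k₂, hk₂⟩ := hu (fun k => g k + c)
    (fun i j hij => add_le_add_left (hgmono hij) c) (E + c) hlub2 hle
  refine ⟨g (max k₁ k₂ + 1), ?_, ?_, ?_⟩
  · exact le_cuwb (hk₁.trans (hgmono (le_max_left k₁ k₂))) (hgwb _)
  · exact cuwb_le' (hgwb _) (hglub.1 (Set.mem_range_self _))
  · exact hk₂.trans (add_le_add_left (hgmono ((le_max_right k₁ k₂).trans (Nat.le_succ _))) c)

/-- The key improvement step: the hypothesis `H` with `a' ≪ a` can be upgraded
to hold for `a` itself. -/
theorem cuwb_main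
    (hpos : ∀ a : S, 0 ≤ a)
    (hO1 : ∀ f : ℕ → S, Monotone f → ∃ s, IsLUB (Set.range f) s)
    (hO2 : ∀ a : S, ∃ f : ℕ → S, Monotone f ∧ (∀ n, CuWayBelow (f n) (f (n + 1))) ∧
      IsLUB (Set.range f) a)
    (hO4 : ∀ f g : ℕ → S, Monotone f → Monotone g → ∀ s t : S,
      IsLUB (Set.range f) s → IsLUB (Set.range g) t →
      IsLUB (Set.range fun n => f n + g n) (s + t))
    (H : ∀ a' a b c x' x : S, CuWayBelow a' a → a ≤ b + c →
      CuWayBelow x' x → x ≤ a → x ≤ b →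
      ∃ e : S, a' ≤ e + c ∧ CuWayBelow x' e ∧ e ≤ a ∧ e ≤ b)
    (a b c x' x : S) (hx : CuWayBelow x' x) (hbc : a ≤ b + c)
    (hxa : x ≤ a) (hxb : x ≤ b) :
    ∃ e : S, a ≤ e + c ∧ CuWayBelow x' e ∧ e ≤ a ∧ e ≤ b := by
  obtain ⟨aseq, hamono, hawb, halub⟩ := hO2 a
  have ha_le : ∀ n, aseq n ≤ a := fun n => halub.1 ⟨n, rfl⟩
  have ha_wb : ∀ n, CuWayBelow (aseq n) a := fun n => cuwb_le' (hawb n) (ha_le (n + 1))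
  set Good : ℕ → S × S → Prop := fun n p =>
    CuWayBelow p.1 p.2 ∧ p.2 ≤ a ∧ p.2 ≤ b ∧ aseq n ≤ p.2 + c with hGooddef
  have hwb00 : CuWayBelow (0 : S) (0 : S) := fun f _ _ _ _ => ⟨0, hpos _⟩
  have base : ∃ p : S × S, Good 0 p ∧ CuWayBelow x' p.1 := by
    obtain ⟨E, hE1, hE2, hE3, hE4⟩ := H (aseq 0) a b c x' x (ha_wb 0) hbc hx hxa hxb
    obtain ⟨e', he1, he2, _⟩ := cuwb_interp hO2 hO4 (c := c) hE2 hwb00 (hpos _)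
    exact ⟨(e', E), ⟨he2, hE3, hE4, hE1⟩, he1⟩
  have step : ∀ n (p : S × S), Good n p →
      ∃ q : S × S, Good (n + 1) q ∧ CuWayBelow p.1 q.1 ∧ aseq n ≤ q.1 + c := by
    rintro n ⟨e', E⟩ ⟨h1, h2, h3, -⟩
    obtain ⟨E₁, hE1, hE2, hE3, hE4⟩ :=
      H (aseq (n + 1)) a b c e' E (ha_wb (n + 1)) hbc h1 h2 h3
    obtain ⟨e₁, g1, g2, g3⟩ := cuwb_interp hO2 hO4 hE2 (hawb n) hE1
    exact ⟨(e₁, E₁), ⟨g2, hE3, hE4, hE1⟩, g1, g3⟩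
  choose stepf hstep1 hstep2 hstep3 using step
  let T : ℕ → Type _ := fun n => { p : S × S // Good n p }
  let F : ∀ n, T n → T (n + 1) := fun n p => ⟨stepf n p.1 p.2, hstep1 n p.1 p.2⟩
  let seqT : ∀ n, T n := fun n =>
    Nat.rec ⟨Classical.choose base, (Classical.choose_spec base).1⟩ F n
  let eseq : ℕ → S := fun n => (seqT n).1.1
  let Eseq : ℕ → S := fun n => (seqT n).1.2
  have hGood : ∀ n, Good n ((seqT n).1) := fun n => (seqT n).2
  have hcross : ∀ n, CuWayBelow (eseq n) (eseq (n + 1)) := fun n =>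
    hstep2 n (seqT n).1 (seqT n).2
  have hac : ∀ n, aseq n ≤ eseq (n + 1) + c := fun n =>
    hstep3 n (seqT n).1 (seqT n).2
  have emono : Monotone eseq := monotone_nat_of_le_succ fun n => cuwb_le (hcross n)
  obtain ⟨e, helub⟩ := hO1 eseq emono
  have he_le : ∀ n, eseq n ≤ e := fun n => helub.1 ⟨n, rfl⟩
  refine ⟨e, ?_, ?_, ?_, ?_⟩
  · refine halub.2 ?_
    rintro s ⟨n, rfl⟩
    exact (hac n).trans (add_le_add_left (he_le (n + 1)) c)
  · exact cuwb_le' (Classical.choose_spec base).2 (he_le 0)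
  · refine helub.2 ?_
    rintro s ⟨n, rfl⟩
    exact (cuwb_le (hGood n).1).trans (hGood n).2.1
  · refine helub.2 ?_
    rintro s ⟨n, rfl⟩
    exact (cuwb_le (hGood n).1).trans (hGood n).2.2.1

end Aux

/-- In a Cu-semigroup, if every `a' ≪ a ≤ b + c` and
`x' ≪ x ≤ a, b` admit `e` with `a' ≤ e + c` and `x' ≪ e ≤ a, b`, then the
strengthened almost Riesz decomposition axiom (O6+) holds. -/
theorem O6plus_of_single_step {S : Type*} [AddCommMonoid S] [PartialOrder S]
    [CovariantClass S S (· + ·) (· ≤ ·)]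
    (hpos : ∀ a : S, 0 ≤ a)
    (hO1 : ∀ f : ℕ → S, Monotone f → ∃ s, IsLUB (Set.range f) s)
    (hO2 : ∀ a : S, ∃ f : ℕ → S, Monotone f ∧ (∀ n, CuWayBelow (f n) (f (n + 1))) ∧
      IsLUB (Set.range f) a)
    (hO3 : ∀ a' a b' b : S, CuWayBelow a' a → CuWayBelow b' b →
      CuWayBelow (a' + b') (a + b))
    (hO4 : ∀ f g : ℕ → S, Monotone f → Monotone g → ∀ s t : S,
      IsLUB (Set.range f) s → IsLUB (Set.range g) t →
      IsLUB (Set.range fun n => f n + g n) (s + t))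
    (H : ∀ a' a b c x' x : S, CuWayBelow a' a → a ≤ b + c →
      CuWayBelow x' x → x ≤ a → x ≤ b →
      ∃ e : S, a' ≤ e + c ∧ CuWayBelow x' e ∧ e ≤ a ∧ e ≤ b) :
    ∀ a b c x' x y' y : S, a ≤ b + c →
      CuWayBelow x' x → x ≤ a → x ≤ b →
      CuWayBelow y' y → y ≤ a → y ≤ c →
      ∃ e f : S, a ≤ e + f ∧ CuWayBelow x' e ∧ e ≤ a ∧ e ≤ b ∧
        CuWayBelow y' f ∧ f ≤ a ∧ f ≤ c := by
  intro a b c x' x y' y hbc hx hxa hxb hy hya hyc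
  obtain ⟨e, he1, he2, he3, he4⟩ := cuwb_main hpos hO1 hO2 hO4 H a b c x' x hx hbc hxa hxb
  obtain ⟨f, hf1, hf2, hf3, hf4⟩ := cuwb_main hpos hO1 hO2 hO4 H a c e y' y hy
    (by rwa [add_comm] at he1) hya hyc
  exact ⟨e, f, by rwa [add_comm] at hf1, he2, he3, he4, hf2, hf3, hf4⟩
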